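/- Let U, V, W : (−1, 1) → ℝ be differentiable, and for x ∈ (−1, 1) let λ̄(x) be the symmetric 2×2 matrix with entries λ̄₁₁ = e^{2U+V}(1 − x)cosh W, λ̄₂₂ = e^{2U−V}(1 + x)cosh W, λ̄₁₂ = λ̄₂₁ = e^{2U}·√(1 − x²)·sinh W. Then for every x ∈ (−1, 1): (1 − x²)·[ ((det λ̄)′)²/(8(det λ̄)²) + (1/8)·Tr((λ̄⁻¹λ̄′)²) ] − 1/(1 − x²) = ((1 − x²)/4)·[ 12(U′)² + (V′)² + (W′)² + sinh²W·(V′ − 1/(1 − x²))² ] − (1/2)V′ − 3xU′ − 3/4, where ′ denotes d/dx. -/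

import Mathlib

open Real

/-- The fiber metric `λ̄` of Section 6 (sphere/lens parameterization), as a
matrix-valued function of `x` determined by target functions `U, V, W`. -/
noncomputable def lamSphere (U V W : ℝ → ℝ) (x : ℝ) : Matrix (Fin 2) (Fin 2) ℝ :=
  !![Real.exp (2 * U x + V x) * (1 - x) * Real.cosh (W x),
     Real.exp (2 * U x) * Real.sqrt (1 - x ^ 2) * Real.sinh (W x);
     Real.exp (2 * U x) * Real.sqrt (1 - x ^ 2) * Real.sinh (W x),
     Real.exp (2 * U x - V x) * (1 + x) * Real.cosh (W x)]

/-- The entrywise derivative `λ̄′` of the fiber metric. -/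
noncomputable def lamSphere' (U V W : ℝ → ℝ) (x : ℝ) : Matrix (Fin 2) (Fin 2) ℝ :=
  Matrix.of fun i j => deriv (fun t => lamSphere U V W t i j) x

set_option maxHeartbeats 2000000 in
/-- The kinetic-term identity of Section 6 for sphere/lens topology, rewriting the λ-part
of the area functional in terms of the target variables `(U, V, W)`. -/
theorem stmt14 (U V W : ℝ → ℝ)
    (hU : ∀ x ∈ Set.Ioo (-1 : ℝ) 1, DifferentiableAt ℝ U x)
    (hV : ∀ x ∈ Set.Ioo (-1 : ℝ) 1, DifferentiableAt ℝ V x)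
    (hW : ∀ x ∈ Set.Ioo (-1 : ℝ) 1, DifferentiableAt ℝ W x) :
    ∀ x ∈ Set.Ioo (-1 : ℝ) 1,
      (1 - x ^ 2) *
          ((deriv (fun t => (lamSphere U V W t).det) x) ^ 2 /
              (8 * ((lamSphere U V W x).det) ^ 2) +
            1 / 8 * Matrix.trace (((lamSphere U V W x)⁻¹ * lamSphere' U V W x) ^ 2)) -
          1 / (1 - x ^ 2)
        = (1 - x ^ 2) / 4 *
            (12 * (deriv U x) ^ 2 + (deriv V x) ^ 2 + (deriv W x) ^ 2 +
              Real.sinh (W x) ^ 2 * (deriv V x - 1 / (1 - x ^ 2)) ^ 2) -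
          1 / 2 * deriv V x - 3 * x * deriv U x - 3 / 4 := by
  rintro x ⟨hx1, hx2⟩
  have hy : (0:ℝ) < 1 - x ^ 2 := by nlinarith
  have hy0 : (1:ℝ) - x ^ 2 ≠ 0 := ne_of_gt hy
  have hu := (hU x ⟨hx1, hx2⟩).hasDerivAt
  have hv := (hV x ⟨hx1, hx2⟩).hasDerivAt
  have hw := (hW x ⟨hx1, hx2⟩).hasDerivAt
  set p := deriv U x with hp
  set q := deriv V x with hq
  set w' := deriv W x with hw'
  set c := Real.cosh (W x) with hcdef
  set s := Real.sinh (W x) with hsdef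
  set r := Real.sqrt (1 - x ^ 2) with hrdef
  set E := Real.exp (2 * U x) with hEdef
  set F := Real.exp (V x) with hFdef
  have hc : c ^ 2 = 1 + s ^ 2 := by rw [hcdef, hsdef, Real.cosh_sq]; ring
  have hr2 : r ^ 2 = 1 - x ^ 2 := Real.sq_sqrt hy.le
  have hr0 : r ≠ 0 := ne_of_gt (Real.sqrt_pos.mpr hy)
  have hE : E ≠ 0 := Real.exp_ne_zero _
  have hF : F ≠ 0 := Real.exp_ne_zero _
  -- derivative of 1 - t^2
  have hyt : HasDerivAt (fun t : ℝ => 1 - t ^ 2) (-(2 * x)) x := by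
    simpa using (hasDerivAt_pow 2 x).const_sub 1
  -- derivative of sqrt(1 - t^2)
  have hsq : HasDerivAt (fun t : ℝ => Real.sqrt (1 - t ^ 2)) (-(2 * x) / (2 * r)) x :=
    hyt.sqrt hy0
  -- entry 00
  have h00 : HasDerivAt (fun t => Real.exp (2 * U t + V t) * (1 - t) * Real.cosh (W t))
      (E * F * ((2 * p + q) * (1 - x) * c - c + (1 - x) * s * w')) x := by
    have h1 : HasDerivAt (fun t => Real.exp (2 * U t + V t))
        (Real.exp (2 * U x + V x) * (2 * p + q)) x := ((hu.const_mul 2).add hv).exp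
    have h2 : HasDerivAt (fun t : ℝ => 1 - t) (-1) x := by
      simpa using (hasDerivAt_id x).const_sub 1
    have := (h1.mul h2).mul hw.cosh
    refine this.congr_deriv ?_
    simp only [Pi.mul_apply]
    rw [Real.exp_add]
    ring
  -- entry 01
  have h01 : HasDerivAt (fun t => Real.exp (2 * U t) * Real.sqrt (1 - t ^ 2) * Real.sinh (W t))
      (E * (2 * p * r * s + (-(2 * x) / (2 * r)) * s + r * c * w')) x := by
    have h1 : HasDerivAt (fun t => Real.exp (2 * U t)) (E * (2 * p)) x := by
      simpa [hEdef] using (hu.const_mul 2).exp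
    have := (h1.mul hsq).mul hw.sinh
    refine this.congr_deriv ?_
    simp only [Pi.mul_apply]
    ring
  -- entry 11
  have h11 : HasDerivAt (fun t => Real.exp (2 * U t - V t) * (1 + t) * Real.cosh (W t))
      (E / F * ((2 * p - q) * (1 + x) * c + c + (1 + x) * s * w')) x := by
    have h1 : HasDerivAt (fun t => Real.exp (2 * U t - V t))
        (Real.exp (2 * U x - V x) * (2 * p - q)) x := ((hu.const_mul 2).sub hv).exp
    have h2 : HasDerivAt (fun t : ℝ => 1 + t) 1 x := by
      simpa using (hasDerivAt_id x).const_add 1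
    have := (h1.mul h2).mul hw.cosh
    refine this.congr_deriv ?_
    simp only [Pi.mul_apply]
    rw [Real.exp_sub]
    field_simp
    ring
  set A' := E * F * ((2 * p + q) * (1 - x) * c - c + (1 - x) * s * w') with hA'
  set B' := E * (2 * p * r * s + (-(2 * x) / (2 * r)) * s + r * c * w') with hB'
  set D' := E / F * ((2 * p - q) * (1 + x) * c + c + (1 + x) * s * w') with hD'
  -- entry functions
  have e00 : (fun t => lamSphere U V W t 0 0)
      = fun t => Real.exp (2 * U t + V t) * (1 - t) * Real.cosh (W t) := by
    funext t; simp [lamSphere]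
  have e01 : (fun t => lamSphere U V W t 0 1)
      = fun t => Real.exp (2 * U t) * Real.sqrt (1 - t ^ 2) * Real.sinh (W t) := by
    funext t; simp [lamSphere]
  have e10 : (fun t => lamSphere U V W t 1 0)
      = fun t => Real.exp (2 * U t) * Real.sqrt (1 - t ^ 2) * Real.sinh (W t) := by
    funext t; simp [lamSphere]
  have e11 : (fun t => lamSphere U V W t 1 1)
      = fun t => Real.exp (2 * U t - V t) * (1 + t) * Real.cosh (W t) := by
    funext t; simp [lamSphere]
  have hL' : lamSphere' U V W x = !![A', B'; B', D'] := by
    ext i j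
    fin_cases i <;> fin_cases j
    · show deriv (fun t => lamSphere U V W t 0 0) x = A'
      rw [e00]; exact h00.deriv
    · show deriv (fun t => lamSphere U V W t 0 1) x = B'
      rw [e01]; exact h01.deriv
    · show deriv (fun t => lamSphere U V W t 1 0) x = B'
      rw [e10]; exact h01.deriv
    · show deriv (fun t => lamSphere U V W t 1 1) x = D'
      rw [e11]; exact h11.deriv
  set a := E * F * (1 - x) * c with ha
  set b := E * r * s with hb
  set d := E / F * (1 + x) * c with hd
  have hlam : lamSphere U V W x = !![a, b; b, d] := by
    rw [lamSphere]
    rw [Real.exp_add, Real.exp_sub]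
  have hF1 : F * F⁻¹ = 1 := mul_inv_cancel₀ hF
  have hdel : a * d - b * b = E ^ 2 * (1 - x ^ 2) := by
    rw [ha, hb, hd, div_eq_mul_inv]
    linear_combination (E^2*(1-x^2)*c^2) * hF1 + (E^2*(1-x^2)) * hc - (E^2*s^2) * hr2
  -- determinant value at x
  have hdetx : (lamSphere U V W x).det = E ^ 2 * (1 - x ^ 2) := by
    rw [hlam, Matrix.det_fin_two_of]
    linear_combination hdel
  -- determinant near x
  have hdet_ev : (fun t => (lamSphere U V W t).det)
      =ᶠ[nhds x] fun t => Real.exp (2 * U t) ^ 2 * (1 - t ^ 2) := by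
    filter_upwards [Ioo_mem_nhds hx1 hx2] with t ht
    rw [lamSphere, Matrix.det_fin_two_of]
    have h1 : Real.sqrt (1 - t ^ 2) ^ 2 = 1 - t ^ 2 :=
      Real.sq_sqrt (by nlinarith [ht.1, ht.2])
    have h2 : Real.cosh (W t) ^ 2 = 1 + Real.sinh (W t) ^ 2 := by
      rw [Real.cosh_sq]; ring
    have h3 : Real.exp (2 * U t + V t) * Real.exp (2 * U t - V t)
        = Real.exp (2 * U t) ^ 2 := by
      rw [← Real.exp_add, pow_two, ← Real.exp_add]; ring_nf
    linear_combination (1 - t^2) * Real.cosh (W t)^2 * h3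
      + Real.exp (2*U t)^2 * (1 - t^2) * h2
      - Real.exp (2*U t)^2 * Real.sinh (W t)^2 * h1
      + Real.exp (2*U t)^2 * Real.sinh (W t)^2 * (h2 - h2)
  have hg : HasDerivAt (fun t => Real.exp (2 * U t) ^ 2 * (1 - t ^ 2))
      (E ^ 2 * (4 * p) * (1 - x ^ 2) + E ^ 2 * (-(2 * x))) x := by
    have h1 : HasDerivAt (fun t => Real.exp (2 * U t) ^ 2) (E ^ 2 * (4 * p)) x := by
      have := ((hu.const_mul 2).exp).pow 2
      refine this.congr_deriv ?_
      norm_num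
      rw [hEdef]; ring
    have := h1.mul hyt
    exact this
  have hderdet : deriv (fun t => (lamSphere U V W t).det) x
      = E ^ 2 * (4 * p) * (1 - x ^ 2) + E ^ 2 * (-(2 * x)) := by
    rw [hdet_ev.deriv_eq, hg.deriv]
  -- inverse
  have hΔ0 : E ^ 2 * (1 - x ^ 2) ≠ 0 := by positivity
  have hinv : (lamSphere U V W x)⁻¹ = (E ^ 2 * (1 - x ^ 2))⁻¹ • !![d, -b; -b, a] := by
    rw [hlam, Matrix.inv_def, Matrix.adjugate_fin_two_of, Matrix.det_fin_two_of,
      Ring.inverse_eq_inv', hdel]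
  have htr : Matrix.trace (((lamSphere U V W x)⁻¹ * lamSphere' U V W x) ^ 2)
      = ((E ^ 2 * (1 - x ^ 2))⁻¹) ^ 2 *
        ((d * A' + -b * B') ^ 2 + 2 * (d * B' + -b * D') * (-b * A' + a * B')
          + (-b * B' + a * D') ^ 2) := by
    rw [hinv, hL', Matrix.smul_mul, smul_pow, Matrix.trace_smul, Matrix.mul_fin_two]
    rw [smul_eq_mul]
    congr 1
    simp [pow_two, Matrix.trace_fin_two, Matrix.mul_apply, Fin.sum_univ_two]
    ring
  have hrr : r * r⁻¹ = 1 := mul_inv_cancel₀ hr0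
  have hTrM : d * A' + a * D' - 2 * (b * B') = E ^ 2 * (4 * p * (1 - x ^ 2) - 2 * x) := by
    rw [ha, hb, hd, hA', hB', hD', div_eq_mul_inv]
    linear_combination (E^2*((4*p*(1-x^2)-2*x)*c^2 + 2*(1-x^2)*c*s*w')) * hF1
      + (2*E^2*x*s^2) * hrr - (E^2*(4*p*s^2 + 2*c*s*w')) * hr2
      + (E^2*(4*p*(1-x^2)-2*x)) * hc
  have hdetL' : A' * D' - B' * B'
      = E ^ 2 * ((1 - x^2)*(4*p^2 - q^2) + 2*q - 4*p*x - 1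
          + s^2*(-(1 - x^2)*q^2 + 2*q - 1) - x^2*s^2*(r⁻¹)^2 - (1 - x^2)*w'^2) := by
    rw [hA', hB', hD', div_eq_mul_inv]
    linear_combination
      (E^2*(((1-x^2)*(4*p^2-q^2) + 2*q - 4*p*x - 1)*c^2 + (4*p*(1-x^2)-2*x)*c*s*w'
        + (1-x^2)*s^2*w'^2)) * hF1
      + (E^2*(4*p*x*s^2 + 2*x*c*s*w')) * hrr
      - (E^2*(4*p^2*s^2 + c^2*w'^2 + 4*p*c*s*w')) * hr2
      + (E^2*((1-x^2)*(4*p^2-q^2) + 2*q - 4*p*x - 1 - (1-x^2)*w'^2)) * hc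
  have hsub : (d * A' + -b * B') ^ 2 + 2 * (d * B' + -b * D') * (-b * A' + a * B')
        + (-b * B' + a * D') ^ 2
      = (E ^ 2 * (4 * p * (1 - x ^ 2) - 2 * x)) ^ 2
        - 2 * (E ^ 2 * (1 - x ^ 2)) * (E ^ 2 * ((1 - x^2)*(4*p^2 - q^2) + 2*q - 4*p*x - 1
          + s^2*(-(1 - x^2)*q^2 + 2*q - 1) - x^2*s^2*(r⁻¹)^2 - (1 - x^2)*w'^2)) := by
    rw [show (d * A' + -b * B') ^ 2 + 2 * (d * B' + -b * D') * (-b * A' + a * B')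
          + (-b * B' + a * D') ^ 2
        = (d * A' + a * D' - 2 * (b * B')) ^ 2 - 2 * (a * d - b * b) * (A' * D' - B' * B')
        from by ring, hTrM, hdel, hdetL']
  have hri : (r⁻¹) ^ 2 = (1 - x ^ 2)⁻¹ := by rw [inv_pow, hr2]
  rw [hderdet, hdetx, htr, hsub, hri]
  field_simp
  ring
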